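/- There is no complete Mammen space (ℕ, S, C) in which the family S of open sets is an analytic subset of the power set of ℕ (identified with Cantor space 2^ℕ). -/

import Mathlib

open Set Topology TopologicalSpace

/-- A topology is perfect if every nonempty open set is infinite. -/
def IsPerfectTop {U : Type*} (T : TopologicalSpace U) : Prop :=
  ∀ V : Set U, IsOpen[T] V → V.Nonempty → V.Infinite

/-- A perfect topology is maximal if no strictly finer topology is perfect. -/
def IsMaxPerfectTop {U : Type*} (T : TopologicalSpace U) : Prop :=
  IsPerfectTop T ∧ ∀ T' : TopologicalSpace U, T' ≤ T → IsPerfectTop T' → T' = T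

/-- `(U, T, C)` is a Mammen space. -/
structure IsMammen {U : Type*} (T : TopologicalSpace U) (C : Set (Set U)) : Prop where
  nonemptyU : Nonempty U
  perfect : IsPerfectTop T
  hausdorff : @T2Space U T
  exNonempty : ∃ c ∈ C, c.Nonempty
  unionMem : ∀ c ∈ C, ∀ d ∈ C, c ∪ d ∈ C
  interMem : ∀ c ∈ C, ∀ d ∈ C, c ∩ d ∈ C
  singletonMem : ∀ c ∈ C, c.Nonempty → ∃ x ∈ c, ({x} : Set U) ∈ C
  emptyMem : ∅ ∈ C
  openInterC : ∀ s ∈ C, IsOpen[T] s → s = ∅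
  interOpenMem : ∀ c ∈ C, ∀ s : Set U, IsOpen[T] s → c ∩ s ∈ C

/-- A Mammen space is complete if every subset is the union of an open set
and a choice category. -/
def MammenComplete {U : Type*} (T : TopologicalSpace U) (C : Set (Set U)) : Prop :=
  ∀ X : Set U, ∃ s c, IsOpen[T] s ∧ c ∈ C ∧ X = s ∪ c


/-- Characteristic-function identification of the power set of ℕ with Cantor space. -/
noncomputable def chi (A : Set ℕ) : ℕ → Bool := fun n =>
  @decide (n ∈ A) (Classical.propDecidable _)




open Set Topology MeasureTheory Filter

namespace Stmt15Aux

/-- finite prefix of a sequence as a list -/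
def pre {γ : Type*} (x : ℕ → γ) (n : ℕ) : List γ := List.ofFn fun i : Fin n => x i

@[simp] lemma pre_length {γ : Type*} (x : ℕ → γ) (n : ℕ) : (pre x n).length = n := by
  simp [pre]

lemma pre_getElem {γ : Type*} (x : ℕ → γ) (n i : ℕ) (h : i < (pre x n).length) :
    (pre x n)[i] = x i := by
  simp [pre]

lemma pre_take {γ : Type*} (x : ℕ → γ) {k n : ℕ} (hk : k ≤ n) :
    (pre x n).take k = pre x k := by
  apply List.ext_getElem
  · simp [hk]
  · intro i h1 h2
    rw [List.getElem_take, pre_getElem, pre_getElem]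

lemma pre_succ {γ : Type*} (x : ℕ → γ) (n : ℕ) : pre x (n + 1) = pre x n ++ [x n] := by
  apply List.ext_getElem
  · simp
  · intro i h1 h2
    rw [pre_getElem, List.getElem_append]
    simp only [pre_length]
    split
    · rw [pre_getElem]
    · have hi : i = n := by simp at h1; omega
      simp [hi]

lemma pre_eq_pre {γ : Type*} {w x : ℕ → γ} {m : ℕ} :
    pre w m = pre x m ↔ ∀ i < m, w i = x i := by
  constructor
  · intro h i hi
    rw [pre, pre, List.ofFn_inj] at h
    exact congrFun h ⟨i, hi⟩
  · intro h
    apply List.ext_getElem (by simp)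
    intro i h1 h2
    rw [pre_getElem, pre_getElem]
    exact h i (by simpa using h1)

/-- In a countable product of discrete spaces, every neighborhood contains a cylinder. -/
lemma cyl_subset_nhds {γ : Type*} [TopologicalSpace γ] [DiscreteTopology γ]
    {x : ℕ → γ} {U : Set (ℕ → γ)} (hU : U ∈ 𝓝 x) :
    ∃ m, ∀ w : ℕ → γ, (∀ i < m, w i = x i) → w ∈ U := by
  rw [nhds_pi, Filter.mem_pi] at hU
  obtain ⟨I, hIfin, t, ht, hsub⟩ := hU
  obtain ⟨m, hm⟩ := hIfin.bddAbove
  refine ⟨m + 1, fun w hw => hsub ?_⟩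
  intro i hi
  rw [hw i (Nat.lt_succ_of_le (hm hi))]
  have := ht i
  rwa [nhds_discrete, Filter.mem_pure] at this

lemma meagre_union {X : Type*} [TopologicalSpace X] {s t : Set X}
    (hs : IsMeagre s) (ht : IsMeagre t) : IsMeagre (s ∪ t) := by
  rw [IsMeagre, Set.compl_union]
  exact Filter.inter_mem hs ht

lemma isMeagre_closure_diff {X : Type*} [TopologicalSpace X] {V : Set X} (hV : IsOpen V) :
    IsMeagre (closure V \ V) := by
  have hcl : IsClosed (closure V \ V) := isClosed_closure.sdiff hV
  have hint : interior (closure V \ V) = ∅ := by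
    by_contra h
    obtain ⟨x, hx⟩ := Set.nonempty_iff_ne_empty.2 h
    have hxcl : x ∈ closure V := (interior_subset hx).1
    obtain ⟨y, hy1, hy2⟩ := (mem_closure_iff.1 hxcl) _ isOpen_interior hx
    exact (interior_subset hy1).2 hy2
  rw [IsMeagre]
  apply residual_of_dense_open hcl.isOpen_compl
  rwa [← interior_eq_empty_iff_dense_compl]

section Hull

variable {α : Type*} [TopologicalSpace α] [SecondCountableTopology α]

/-- Every set has a Baire-measurable hull: a Baire measurable superset which is minimal
modulo meager sets among Baire measurable supersets. -/
lemma exists_baire_hull (S : Set α) :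
    ∃ H : Set α, BaireMeasurableSet H ∧ S ⊆ H ∧
      ∀ B : Set α, BaireMeasurableSet B → S ⊆ B → IsMeagre (H \ B) := by
  obtain ⟨b, hbc, -, hbb⟩ := TopologicalSpace.exists_countable_basis α
  set I : Set (Set α) := {u ∈ b | IsMeagre (S ∩ u)} with hI
  set W : Set α := ⋃₀ I with hWdef
  have hWo : IsOpen W := isOpen_sUnion fun u hu => hbb.isOpen hu.1
  have hSW : IsMeagre (S ∩ W) := by
    have : S ∩ W ⊆ ⋃ u ∈ I, (S ∩ u) := by
      rintro x ⟨hxS, u, huI, hxu⟩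
      exact Set.mem_biUnion huI ⟨hxS, hxu⟩
    refine IsMeagre.mono this ?_
    rw [IsMeagre, Set.compl_iUnion₂]
    exact (countable_bInter_mem (hbc.mono (Set.sep_subset _ _))).mpr fun u hu => hu.2
  refine ⟨Wᶜ ∪ (S ∩ W), ?_, ?_, ?_⟩
  · exact (hWo.baireMeasurableSet.compl).union hSW.baireMeasurableSet
  · intro x hx
    by_cases hxW : x ∈ W
    · exact Or.inr ⟨hx, hxW⟩
    · exact Or.inl hxW
  · intro B hB hSB
    obtain ⟨V, hVo, hBV⟩ := hB.residualEq_isOpen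
    set M : Set α := {x | ¬(x ∈ B ↔ x ∈ V)} with hM
    have hMm : IsMeagre M := by
      rw [IsMeagre]
      have := Filter.eventuallyEq_set.mp hBV
      filter_upwards [this] with x hx using fun h => h hx
    have hWc_clV : Wᶜ ⊆ closure V := by
      intro x hx
      by_contra hxcl
      apply hx
      obtain ⟨u, hub, hxu, husub⟩ :=
        hbb.exists_subset_of_mem_open (by exact hxcl : x ∈ (closure V)ᶜ)
          isClosed_closure.isOpen_compl
      have huI : u ∈ I := by
        refine ⟨hub, IsMeagre.mono ?_ hMm⟩
        intro y ⟨hyS, hyu⟩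
        intro hyiff
        have hyV : y ∈ V := hyiff.mp (hSB hyS)
        exact (husub hyu) (subset_closure hyV)
      exact ⟨u, huI, hxu⟩
    have key : (Wᶜ ∪ (S ∩ W)) \ B ⊆ (closure V \ V) ∪ M ∪ (S ∩ W) := by
      rintro x ⟨hx1, hx2⟩
      rcases hx1 with hx1 | hx1
      · have hxclV : x ∈ closure V := hWc_clV hx1
        by_cases hxV : x ∈ V
        · exact Or.inl (Or.inr (fun hyiff => hx2 (hyiff.mpr hxV)))
        · exact Or.inl (Or.inl ⟨hxclV, hxV⟩)
      · exact Or.inr hx1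
    exact IsMeagre.mono key (meagre_union (meagre_union (isMeagre_closure_diff hVo) hMm) hSW)

end Hull

section Suslin

variable {α : Type*} [TopologicalSpace α] [SecondCountableTopology α]

/-- The Suslin operation applied to a monotone scheme of closed sets yields a
Baire measurable set. -/
theorem baireMeasurableSet_suslin (B : List ℕ → Set α) (hBc : ∀ L, IsClosed (B L))
    (hmono : ∀ L n, B (L ++ [n]) ⊆ B L) :
    BaireMeasurableSet {y | ∃ x : ℕ → ℕ, ∀ n, y ∈ B (pre x n)} := by
  classical
  choose hull hullBM hullSub hullSpec using fun S : Set α => exists_baire_hull S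
  -- the partial Suslin sets
  set A : List ℕ → Set α := fun L =>
    {y | ∃ x : ℕ → ℕ, pre x L.length = L ∧ ∀ n, y ∈ B (pre x n)} with hA
  have hAB : ∀ L, A L ⊆ B L := by
    rintro L y ⟨x, hx, hy⟩
    have := hy L.length
    rwa [hx] at this
  have hAtake : ∀ (L : List ℕ) (k : ℕ), k ≤ L.length → A L ⊆ A (L.take k) := by
    rintro L k hk y ⟨x, hx, hy⟩
    refine ⟨x, ?_, hy⟩
    rw [List.length_take, min_eq_left hk, ← hx, pre_take x hk]
  -- the approximating Baire measurable sets
  set H : List ℕ → Set α := fun L =>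
    ⋂ k, if k ≤ L.length then hull (A (L.take k)) ∩ B (L.take k) else univ with hH
  have hHBM : ∀ L, BaireMeasurableSet (H L) := by
    intro L
    refine BaireMeasurableSet.iInter fun k => ?_
    split
    · exact (hullBM _).inter (hBc _).isOpen_compl.baireMeasurableSet.of_compl
    · exact isOpen_univ.baireMeasurableSet
  have hAH : ∀ L, A L ⊆ H L := by
    intro L y hy
    refine Set.mem_iInter.mpr fun k => ?_
    split
    · next hk => exact ⟨hullSub _ (hAtake L k hk hy), hAB _ (hAtake L k hk hy)⟩
    · exact Set.mem_univ _
  have hHhull : ∀ L, H L ⊆ hull (A L) := by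
    intro L y hy
    have := Set.mem_iInter.mp hy L.length
    rw [if_pos le_rfl, List.take_length] at this
    exact this.1
  have hHB : ∀ L, H L ⊆ B L := by
    intro L y hy
    have := Set.mem_iInter.mp hy L.length
    rw [if_pos le_rfl, List.take_length] at this
    exact this.2
  have hHmono : ∀ (L : List ℕ) (m : ℕ), H (L ++ [m]) ⊆ H L := by
    intro L m y hy
    refine Set.mem_iInter.mpr fun k => ?_
    split
    · next hk =>
      have := Set.mem_iInter.mp hy k
      rw [if_pos (by simp; omega), List.take_append_of_le_length hk] at this
      exact this
    · exact Set.mem_univ _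
  have hAdecomp : ∀ L : List ℕ, A L ⊆ ⋃ m, A (L ++ [m]) := by
    rintro L y ⟨x, hx, hy⟩
    refine Set.mem_iUnion.mpr ⟨x L.length, x, ?_, hy⟩
    rw [List.length_append, List.length_singleton, pre_succ, hx]
  -- the meager error sets
  set E : List ℕ → Set α := fun L => H L \ ⋃ m, H (L ++ [m]) with hE
  have hEm : ∀ L, IsMeagre (E L) := by
    intro L
    have h1 : BaireMeasurableSet (⋃ m, H (L ++ [m])) :=
      BaireMeasurableSet.iUnion fun m => hHBM _
    have h2 : A L ⊆ ⋃ m, H (L ++ [m]) :=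
      (hAdecomp L).trans (Set.iUnion_mono fun m => hAH _)
    have := hullSpec (A L) _ h1 h2
    exact IsMeagre.mono (by exact fun y hy => ⟨hHhull L hy.1, hy.2⟩) this
  set Etot : Set α := ⋃ L : List ℕ, E L with hEtot
  have hEtotm : IsMeagre Etot := by
    rw [IsMeagre, hEtot, Set.compl_iUnion]
    exact countable_iInter_mem.mpr fun L => hEm L
  -- main inclusion
  have main : H [] \ Etot ⊆ {y | ∃ x : ℕ → ℕ, ∀ n, y ∈ B (pre x n)} := by
    rintro y ⟨hy0, hyE⟩
    have key : ∀ M : List ℕ, y ∈ H M → ∃ m, y ∈ H (M ++ [m]) := by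
      intro M hM
      by_contra hno
      push_neg at hno
      refine hyE (Set.mem_iUnion.mpr ⟨M, hM, fun hmem => ?_⟩)
      obtain ⟨m, hmm⟩ := Set.mem_iUnion.mp hmem
      exact hno m hmm
    -- build the branch
    let step : {M : List ℕ // y ∈ H M} → {M : List ℕ // y ∈ H M} :=
      fun p => ⟨p.1 ++ [(key p.1 p.2).choose], (key p.1 p.2).choose_spec⟩
    let f : ℕ → {M : List ℕ // y ∈ H M} := fun n => Nat.rec ⟨[], hy0⟩ (fun _ p => step p) n
    let x : ℕ → ℕ := fun n => (key (f n).1 (f n).2).choose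
    have hfx : ∀ n, (f n).1 = pre x n := by
      intro n
      induction n with
      | zero => rfl
      | succ n ih =>
        show (step (f n)).1 = _
        rw [pre_succ, ← ih]
    refine ⟨x, fun n => ?_⟩
    have := (f n).2
    rw [hfx n] at this
    exact hHB _ this
  have hsub : {y | ∃ x : ℕ → ℕ, ∀ n, y ∈ B (pre x n)} ⊆ H [] := by
    rintro y ⟨x, hy⟩
    exact hAH [] ⟨x, by simp [pre], hy⟩
  have heq : {y | ∃ x : ℕ → ℕ, ∀ n, y ∈ B (pre x n)} =
      (H [] \ Etot) ∪ ({y | ∃ x : ℕ → ℕ, ∀ n, y ∈ B (pre x n)} ∩ Etot) := by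
    ext y
    constructor
    · intro hy
      by_cases hyE : y ∈ Etot
      · exact Or.inr ⟨hy, hyE⟩
      · exact Or.inl ⟨hsub hy, hyE⟩
    · rintro (hy | hy)
      · exact main hy
      · exact hy.1
  rw [heq]
  exact ((hHBM []).diff hEtotm.baireMeasurableSet).union
    (IsMeagre.mono Set.inter_subset_right hEtotm).baireMeasurableSet

end Suslin

section AnalyticBP

variable {α : Type*} [TopologicalSpace α] [T1Space α] [RegularSpace α]
  [SecondCountableTopology α]

/-- Analytic sets (in a nice space) have the Baire property. -/
theorem AnalyticSet.baireMeasurableSet' {s : Set α} (hs : AnalyticSet s) :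
    BaireMeasurableSet s := by
  rw [AnalyticSet_def] at hs
  rcases hs with rfl | ⟨f, hf, rfl⟩
  · exact IsMeagre.empty.baireMeasurableSet
  set B : List ℕ → Set α := fun L =>
    closure (f '' {x : ℕ → ℕ | pre x L.length = L}) with hB
  have hBc : ∀ L, IsClosed (B L) := fun L => isClosed_closure
  have hmono : ∀ L n, B (L ++ [n]) ⊆ B L := by
    intro L n
    apply closure_mono
    apply Set.image_mono
    intro x hx
    simp only [Set.mem_setOf_eq] at hx ⊢
    have h1 : (L ++ [n]).length = L.length + 1 := by simp
    have := congrArg (List.take L.length) hx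
    rwa [pre_take x (by rw [h1]; omega), List.take_append_of_le_length le_rfl,
      List.take_length] at this
  have hrange : Set.range f = {y | ∃ x : ℕ → ℕ, ∀ n, y ∈ B (pre x n)} := by
    ext y
    constructor
    · rintro ⟨x, rfl⟩
      refine ⟨x, fun n => subset_closure ⟨x, ?_, rfl⟩⟩
      simp [Set.mem_setOf_eq, pre_length]
    · rintro ⟨x, hx⟩
      have : y = f x := by
        by_contra hne
        have hnbhd : ({y}ᶜ : Set α) ∈ 𝓝 (f x) :=
          isOpen_compl_singleton.mem_nhds (by simpa using (Ne.symm hne))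
        obtain ⟨t, htn, htc, hts⟩ := exists_mem_nhds_isClosed_subset hnbhd
        have hpre : f ⁻¹' t ∈ 𝓝 x := hf.continuousAt.preimage_mem_nhds htn
        obtain ⟨m, hm⟩ := cyl_subset_nhds hpre
        have hsub : f '' {w : ℕ → ℕ | pre w (pre x m).length = pre x m} ⊆ t := by
          rintro z ⟨w, hw, rfl⟩
          simp only [Set.mem_setOf_eq, pre_length] at hw
          exact hm w (pre_eq_pre.mp hw)
        have : y ∈ t := htc.closure_subset ((closure_mono hsub) (hx m))
        exact hts this rfl
      exact ⟨x, this.symm⟩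
  rw [hrange]
  exact baireMeasurableSet_suslin B hBc hmono

end AnalyticBP

end Stmt15Aux

namespace Stmt15Aux

lemma chi_mem (A : Set ℕ) (n : ℕ) : chi A n = true ↔ n ∈ A := by
  simp [chi]

lemma pi_chi (A : Set ℕ) : {n | chi A n = true} = A := by
  ext n; exact chi_mem A n

/-- the coordinate-flipping involution beyond `m` -/
def flipAt (m : ℕ) : (ℕ → Bool) → (ℕ → Bool) := fun v i => if i < m then v i else !(v i)

lemma flipAt_invol (m : ℕ) : Function.Involutive (flipAt m) := by
  intro v
  funext i
  by_cases h : i < m <;> simp [flipAt, h]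

lemma flipAt_cont (m : ℕ) : Continuous (flipAt m) := by
  apply continuous_pi
  intro i
  by_cases h : i < m
  · simp only [flipAt, if_pos h]
    exact continuous_apply i
  · simp only [flipAt, if_neg h]
    exact Continuous.comp (continuous_of_discreteTopology (f := fun b : Bool => !b))
      (continuous_apply i)

/-- the coordinate-flipping homeomorphism -/
def flipHomeo (m : ℕ) : (ℕ → Bool) ≃ₜ (ℕ → Bool) :=
  { (flipAt_invol m).toPerm with
    continuous_toFun := flipAt_cont m
    continuous_invFun := flipAt_cont m }

lemma flipHomeo_coe (m : ℕ) : ⇑(flipHomeo m) = flipAt m := rfl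

lemma isOpen_cylSet {m : ℕ} (v₀ : ℕ → Bool) :
    IsOpen {w : ℕ → Bool | ∀ i < m, w i = v₀ i} := by
  have h : {w : ℕ → Bool | ∀ i < m, w i = v₀ i} =
      ⋂ i ∈ Finset.range m, {w : ℕ → Bool | w i = v₀ i} := by
    ext w
    simp [Finset.mem_range]
  rw [h]
  refine isOpen_biInter_finset fun i _ => ?_
  have he : {w : ℕ → Bool | w i = v₀ i} = (fun w : ℕ → Bool => w i) ⁻¹' {v₀ i} := rfl
  rw [he]
  exact (isOpen_discrete ({v₀ i} : Set Bool)).preimage (continuous_apply i)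


/-- the pairs (u, v) where u is "nonempty" and "disjoint from v" -/
def Wpair : Set ((ℕ → Bool) × (ℕ → Bool)) :=
  {p | (∃ n, p.1 n = true) ∧ ∀ n, ¬(p.1 n = true ∧ p.2 n = true)}

open MeasureTheory in
lemma analytic_Ab (Sb : Set (ℕ → Bool)) (hAnal : AnalyticSet Sb) :
    AnalyticSet (Prod.snd '' ((Sb ×ˢ (Set.univ : Set (ℕ → Bool))) ∩ Wpair)) := by
  haveI : PolishSpace (ℕ → Bool) := by haveI : PolishSpace Bool := inferInstance; infer_instance
  have hprod : AnalyticSet (Sb ×ˢ (Set.univ : Set (ℕ → Bool))) := by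
    rw [AnalyticSet_def] at hAnal
    rcases hAnal with h0 | ⟨f, hfc, hfr⟩
    · rw [h0, Set.empty_prod]
      exact analyticSet_empty
    · have hrange : Sb ×ˢ (Set.univ : Set (ℕ → Bool)) =
          Set.range (fun p : (ℕ → ℕ) × (ℕ → Bool) => (f p.1, p.2)) := by
        ext ⟨u, w⟩
        constructor
        · rintro ⟨hu, -⟩
          rw [← hfr] at hu
          obtain ⟨a, ha⟩ := hu
          exact ⟨(a, w), by simp [ha]⟩
        · rintro ⟨⟨a, b⟩, hp⟩
          obtain ⟨h1, h2⟩ := Prod.ext_iff.mp hp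
          refine ⟨?_, trivial⟩
          rw [← hfr]
          exact h1 ▸ ⟨a, rfl⟩
      rw [hrange]
      exact analyticSet_range_of_polishSpace
        ((hfc.comp continuous_fst).prodMk continuous_snd)
  have hWana : AnalyticSet Wpair := by
    borelize ((ℕ → Bool) × (ℕ → Bool))
    apply MeasurableSet.analyticSet
    have h1 : MeasurableSet {p : (ℕ → Bool) × (ℕ → Bool) | ∃ n, p.1 n = true} := by
      have h : {p : (ℕ → Bool) × (ℕ → Bool) | ∃ n, p.1 n = true} =
          ⋃ n, (fun p : (ℕ → Bool) × (ℕ → Bool) => p.1 n) ⁻¹' {true} := by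
        ext p; simp
      rw [h]
      refine MeasurableSet.iUnion fun n => ?_
      exact (((isOpen_discrete ({true} : Set Bool)).preimage
        ((continuous_apply n).comp continuous_fst))).measurableSet
    have h2 : MeasurableSet {p : (ℕ → Bool) × (ℕ → Bool) | ∀ n, ¬(p.1 n = true ∧ p.2 n = true)} := by
      have h : {p : (ℕ → Bool) × (ℕ → Bool) | ∀ n, ¬(p.1 n = true ∧ p.2 n = true)} =
          ⋂ n, ((fun p : (ℕ → Bool) × (ℕ → Bool) => p.1 n) ⁻¹' {true} ∩
            (fun p : (ℕ → Bool) × (ℕ → Bool) => p.2 n) ⁻¹' {true})ᶜ := by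
        ext p
        simp [Set.mem_iInter]
      rw [h]
      refine MeasurableSet.iInter fun n => MeasurableSet.compl ?_
      exact (((isOpen_discrete ({true} : Set Bool)).preimage
        ((continuous_apply n).comp continuous_fst))).measurableSet.inter
        (((isOpen_discrete ({true} : Set Bool)).preimage
        ((continuous_apply n).comp continuous_snd))).measurableSet
    exact h1.inter h2
  have hIA : AnalyticSet ((Sb ×ˢ (Set.univ : Set (ℕ → Bool))) ∩ Wpair) := by
    have hpair : ∀ b : Bool,
        AnalyticSet (bif b then Sb ×ˢ (Set.univ : Set (ℕ → Bool)) else Wpair) := by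
      intro b
      cases b
      · simpa using hWana
      · simpa using hprod
    have h := AnalyticSet.iInter hpair
    have heq : (⋂ b : Bool, (bif b then Sb ×ˢ (Set.univ : Set (ℕ → Bool)) else Wpair)) =
        (Sb ×ˢ (Set.univ : Set (ℕ → Bool))) ∩ Wpair := by
      ext p
      rw [Set.mem_iInter, Bool.forall_bool]
      exact ⟨fun ⟨a, b⟩ => ⟨b, a⟩, fun ⟨a, b⟩ => ⟨b, a⟩⟩
    rwa [heq] at h
  exact hIA.image_of_continuous continuous_snd

end Stmt15Aux

open Stmt15Aux

theorem stmt15 :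
    ¬ ∃ (T : TopologicalSpace ℕ) (C : Set (Set ℕ)),
      IsMammen T C ∧ MammenComplete T C ∧
      MeasureTheory.AnalyticSet (chi '' {V : Set ℕ | IsOpen[T] V}) := by
  classical
  rintro ⟨T, C, hM, hComp, hAnal⟩
  -- move to Cantor space
  set P : (ℕ → Bool) → Set ℕ := fun v => {n | v n = true} with hP
  set Ab : Set (ℕ → Bool) := Prod.snd ''
    (((chi '' {V : Set ℕ | IsOpen[T] V}) ×ˢ (Set.univ : Set (ℕ → Bool))) ∩ Wpair) with hAb
  set Db : Set (ℕ → Bool) := Abᶜ with hDb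
  have hAbA : MeasureTheory.AnalyticSet Ab := analytic_Ab _ hAnal
  haveI hT2 : T2Space ℕ := hM.hausdorff
  -- every choice category has empty interior
  have CsubE : ∀ c ∈ C, interior c = ∅ := by
    intro c hc
    have h1 : c ∩ interior c ∈ C := hM.interOpenMem c hc _ isOpen_interior
    rw [Set.inter_eq_self_of_subset_right interior_subset] at h1
    exact hM.openInterC _ h1 isOpen_interior
  -- every set with empty interior is a choice category
  have EsubC : ∀ X : Set ℕ, interior X = ∅ → X ∈ C := by
    intro X hX
    obtain ⟨s, c, hs, hc, hsc⟩ := hComp X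
    have hsX : s ⊆ interior X := (hs.subset_interior_iff).mpr (hsc ▸ Set.subset_union_left)
    rw [hX, Set.subset_empty_iff] at hsX
    rwa [hsc, hsX, Set.empty_union]
  have ideal : ∀ X Y : Set ℕ, interior X = ∅ → interior Y = ∅ → interior (X ∪ Y) = ∅ :=
    fun X Y hX hY => CsubE _ (hM.unionMem _ (EsubC X hX) _ (EsubC Y hY))
  have denseE : ∀ X : Set ℕ, Dense X ↔ interior Xᶜ = ∅ := by
    intro X
    constructor
    · intro h
      rw [interior_compl, compl_empty_iff]
      exact h.closure_eq
    · intro h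
      rw [dense_iff_closure_eq, ← compl_empty_iff]
      rwa [interior_compl] at h
  have dense_inter : ∀ X Y : Set ℕ, Dense X → Dense Y → Dense (X ∩ Y) := by
    intro X Y hX hY
    rw [denseE] at hX hY ⊢
    rw [Set.compl_inter]
    exact ideal _ _ hX hY
  have dense_inf : ∀ X : Set ℕ, Dense X → X.Infinite := by
    intro X hX
    by_contra h
    rw [Set.not_infinite] at h
    have h1 : closure X = X := h.isClosed.closure_eq
    have h2 : X = Set.univ := by rw [← h1]; exact hX.closure_eq
    exact Set.infinite_univ (h2 ▸ h)
  have perfect_empty : ∀ s : Set ℕ, IsOpen s → s.Finite → s = ∅ := by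
    intro s hs hfin
    by_contra hne
    exact (hM.perfect s hs (Set.nonempty_iff_ne_empty.mpr hne)) hfin
  have memAb : ∀ v : ℕ → Bool, v ∈ Ab ↔ ∃ s : Set ℕ, IsOpen s ∧ s.Nonempty ∧ s ∩ P v = ∅ := by
    intro v
    constructor
    · rintro ⟨⟨u, v'⟩, ⟨⟨⟨s, hs, rfl⟩, -⟩, ⟨⟨n₀, hn₀⟩, hdisj⟩⟩, rfl⟩
      refine ⟨s, hs, ⟨n₀, (chi_mem s n₀).mp hn₀⟩, ?_⟩
      rw [Set.eq_empty_iff_forall_notMem]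
      rintro n ⟨hn1, hn2⟩
      exact hdisj n ⟨(chi_mem s n).mpr hn1, hn2⟩
    · rintro ⟨s, hso, ⟨n₀, hn₀⟩, hdisj⟩
      refine ⟨(chi s, v), ⟨⟨⟨s, hso, rfl⟩, trivial⟩, ⟨n₀, (chi_mem s n₀).mpr hn₀⟩, ?_⟩, rfl⟩
      rintro n ⟨h1, h2⟩
      exact (Set.eq_empty_iff_forall_notMem.mp hdisj n) ⟨(chi_mem s n).mp h1, h2⟩
  have memDb : ∀ v : ℕ → Bool, v ∈ Db ↔ Dense (P v) := by
    intro v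
    rw [hDb, Set.mem_compl_iff, memAb, dense_iff_inter_open]
    constructor
    · intro h U hUo hUne
      rw [Set.nonempty_iff_ne_empty]
      intro hemp
      exact h ⟨U, hUo, hUne, hemp⟩
    · rintro hd ⟨s, hso, hsne, hdisj⟩
      have := hd s hso hsne
      rw [hdisj] at this
      exact Set.not_nonempty_empty this
  have hDbBM : BaireMeasurableSet Db :=
    (Stmt15Aux.AnalyticSet.baireMeasurableSet' hAbA).compl
  obtain ⟨V, hVo, hDV⟩ := hDbBM.residualEq_isOpen
  set M : Set (ℕ → Bool) := {v | ¬(v ∈ Db ↔ v ∈ V)} with hMdef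
  have hMm : IsMeagre M := by
    rw [IsMeagre]
    have h := Filter.eventuallyEq_set.mp hDV
    filter_upwards [h] with x hx using fun h' => h' hx
  rcases Set.eq_empty_or_nonempty V with rfl | ⟨v₀, hv₀⟩
  · -- V = ∅ : Db is meager; Talagrand-style argument
    have hDbMeager : IsMeagre Db := by
      refine IsMeagre.mono (fun v hv => ?_) hMm
      intro hiff
      exact (hiff.mp hv)
    rw [IsMeagre] at hDbMeager
    rw [mem_residual_iff] at hDbMeager
    obtain ⟨Sg, hSgo, hSgd, hSgc, hSgsub⟩ := hDbMeager
    have hSgne : Sg.Nonempty := by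
      by_contra h
      rw [Set.not_nonempty_iff_eq_empty] at h
      have hall : (fun _ : ℕ => true) ∈ Db := by
        rw [memDb]
        have : P (fun _ : ℕ => true) = Set.univ := Set.eq_univ_of_forall fun n => rfl
        rw [this]
        exact dense_univ
      have : (fun _ : ℕ => true) ∈ ⋂₀ Sg := by rw [h]; simp
      exact (hSgsub this) hall
    obtain ⟨g, hg⟩ := hSgc.exists_eq_range hSgne
    have hgo : ∀ k, IsOpen (g k) := fun k => hSgo _ (hg ▸ Set.mem_range_self k)
    have hgd : ∀ k, Dense (g k) := fun k => hSgd _ (hg ▸ Set.mem_range_self k)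
    have hginter : ∀ v : ℕ → Bool, (∀ k, v ∈ g k) → v ∉ Db := by
      intro v hv hvDb
      have hmem : v ∈ ⋂₀ Sg := by
        rw [hg]
        rintro t ⟨k, rfl⟩
        exact hv k
      exact (hSgsub hmem) hvDb
    set G : ℕ → Set (ℕ → Bool) := fun k => ⋂ j ∈ Finset.range (k + 1), g j with hGdef
    have hGo : ∀ k, IsOpen (G k) := fun k => isOpen_biInter_finset fun j _ => hgo j
    have hGd : ∀ k, Dense (G k) := by
      intro k
      induction k with
      | zero => simpa [hGdef] using hgd 0
      | succ k ih =>
        have hstep : G (k + 1) = g (k + 1) ∩ G k := by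
          rw [hGdef]
          simp only []
          rw [Finset.range_add_one, Finset.set_biInter_insert]
        rw [hstep]
        exact Dense.inter_of_isOpen_left (hgd (k + 1)) ih (hgo (k + 1))
    have hGsub : ∀ j k, j ≤ k → G k ⊆ g j := fun j k hjk =>
      Set.biInter_subset_of_mem (Finset.mem_range.mpr (Nat.lt_succ_of_le hjk))
    -- uniform extension
    have unif : ∀ k m : ℕ, ∃ m', m < m' ∧ ∀ w : ℕ → Bool, ∃ p : ℕ → Bool,
        (∀ i < m, p i = w i) ∧ ∀ u : ℕ → Bool, (∀ i < m', u i = p i) → u ∈ G k := by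
      intro k m
      have key : ∀ w : ℕ → Bool, ∃ p : ℕ → Bool, ∃ l : ℕ,
          (∀ i < m, p i = w i) ∧ ∀ u, (∀ i < l, u i = p i) → u ∈ G k := by
        intro w
        obtain ⟨p, hpGk, hpcyl⟩ := (hGd k).exists_mem_open (isOpen_cylSet (m := m) w)
          ⟨w, fun i _ => rfl⟩
        obtain ⟨l, hl⟩ := cyl_subset_nhds ((hGo k).mem_nhds hpGk)
        exact ⟨p, l, hpcyl, fun u hu => hl u hu⟩
      choose pf lf hpf1 hpf2 using key
      set ext : (Fin m → Bool) → (ℕ → Bool) :=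
        fun a i => if h : i < m then a ⟨i, h⟩ else false with hext
      refine ⟨m + 1 + Finset.univ.sup (fun a : Fin m → Bool => lf (ext a)), by omega,
        fun w => ?_⟩
      set a : Fin m → Bool := fun i => w i.1 with ha
      refine ⟨pf (ext a), fun i hi => ?_, fun u hu => ?_⟩
      · rw [hpf1 (ext a) i hi]
        simp [hext, hi, ha]
      · apply hpf2 (ext a) u
        intro i hil
        apply hu
        have hle : lf (ext a) ≤ Finset.univ.sup (fun a : Fin m → Bool => lf (ext a)) :=
          Finset.le_sup (f := fun a : Fin m → Bool => lf (ext a)) (Finset.mem_univ a)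
        omega
    choose Nf hNlt hNspec using unif
    set N : ℕ → ℕ := fun k => Nat.rec 0 (fun k' ih => Nf k' ih) k with hNdef
    have hNsucc : ∀ k, N (k + 1) = Nf k (N k) := fun k => rfl
    have hNmono : StrictMono N :=
      strictMono_nat_of_lt_succ fun k => by rw [hNsucc]; exact hNlt k (N k)
    -- every dense set meets all but finitely many of the intervals
    have talagrand : ∀ X : Set ℕ, Dense X →
        {k | X ∩ Set.Ico (N k) (N (k + 1)) = ∅}.Finite := by
      intro X hX
      by_contra hK
      have hKinf : {k | X ∩ Set.Ico (N k) (N (k + 1)) = ∅}.Infinite := hK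
      set v : ℕ → Bool := chi X with hv
      have hspec := fun k => hNspec k (N k)
      choose Pk hPk1 hPk2 using hspec
      set q : ℕ → ℕ → Bool := fun k => Nat.rec v (fun k' qk =>
        if X ∩ Set.Ico (N k') (N (k' + 1)) = ∅ then
          (fun i => if i < N (k' + 1) then Pk k' qk i else qk i) else qk) k with hq
      have hqsucc : ∀ k, q (k + 1) = if X ∩ Set.Ico (N k) (N (k + 1)) = ∅ then
          (fun i => if i < N (k + 1) then Pk k (q k) i else q k i) else q k := fun k => rfl
      have agree : ∀ mm k, k ≤ mm → ∀ i, i < N k → q mm i = q k i := by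
        intro mm
        induction mm with
        | zero => intro k hk i _; rw [Nat.le_zero.mp hk]
        | succ mm ih =>
          intro k hk i hi
          by_cases hk' : k = mm + 1
          · rw [hk']
          · have hkm : k ≤ mm := by omega
            have hiNm : i < N mm := lt_of_lt_of_le hi (hNmono.monotone hkm)
            have hstep : q (mm + 1) i = q mm i := by
              rw [hqsucc mm]
              split
              · show (if i < N (mm + 1) then Pk mm (q mm) i else q mm i) = q mm i
                rw [if_pos (lt_trans hiNm (hNmono (Nat.lt_succ_self mm)))]
                exact hPk1 mm (q mm) i hiNm
              · rfl
            rw [hstep]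
            exact ih k hkm i hi
      have trues : ∀ k i, v i = true → q k i = true := by
        intro k
        induction k with
        | zero => intro i h; exact h
        | succ k ih =>
          intro i h
          rw [hqsucc k]
          split
          · next hcond =>
            show (if i < N (k + 1) then Pk k (q k) i else q k i) = true
            by_cases hiN : i < N (k + 1)
            · rw [if_pos hiN]
              by_cases hiNk : i < N k
              · rw [hPk1 k (q k) i hiNk]
                exact ih i h
              · exfalso
                have hiX : i ∈ X := by rw [← chi_mem X i]; exact h
                have hmem : i ∈ X ∩ Set.Ico (N k) (N (k + 1)) :=
                  ⟨hiX, le_of_not_gt hiNk, hiN⟩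
                rw [hcond] at hmem
                exact hmem
            · rw [if_neg hiN]
              exact ih i h
          · exact ih i h
      set w : ℕ → Bool := fun i => q (i + 1) i with hwdef
      have hwstab : ∀ k i, i < N (k + 1) → w i = q (k + 1) i := by
        intro k i hi
        have h1 : i < N (i + 1) := lt_of_lt_of_le (Nat.lt_succ_self i) hNmono.le_apply
        have ha := agree (max (i + 1) (k + 1)) (i + 1) (le_max_left _ _) i h1
        have hb := agree (max (i + 1) (k + 1)) (k + 1) (le_max_right _ _) i hi
        show q (i + 1) i = q (k + 1) i
        rw [← ha, hb]
      have hwG : ∀ k, X ∩ Set.Ico (N k) (N (k + 1)) = ∅ → w ∈ G k := by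
        intro k hcond
        apply hPk2 k (q k) w
        intro i hi
        have hi' : i < N (k + 1) := hi
        rw [hwstab k i hi', hqsucc k, if_pos hcond]
        show (if i < N (k + 1) then Pk k (q k) i else q k i) = Pk k (q k) i
        rw [if_pos hi']
      have hwall : ∀ j, w ∈ g j := by
        intro j
        obtain ⟨k, hkK, hjk⟩ := hKinf.exists_gt j
        exact hGsub j k (le_of_lt hjk) (hwG k hkK)
      have hwDb : w ∈ Db := by
        rw [memDb]
        refine hX.mono ?_
        intro i hiX
        have hvi : v i = true := (chi_mem X i).mpr hiX
        exact trues (i + 1) i hvi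
      exact (hginter w hwall) hwDb
    -- an uncountable almost disjoint family
    set Af : (ℕ → Bool) → Set ℕ :=
      fun x => Set.range (fun j => Encodable.encode (pre x j)) with hAfdef
    have hAfinf : ∀ x, (Af x).Infinite := by
      intro x
      apply Set.infinite_range_of_injective
      intro j j' h
      have h2 := Encodable.encode_injective h
      have h3 := congrArg List.length h2
      simpa using h3
    have hAfad : ∀ x y : ℕ → Bool, x ≠ y → (Af x ∩ Af y).Finite := by
      intro x y hxy
      obtain ⟨i₀, hi₀⟩ : ∃ i, x i ≠ y i := by
        by_contra h
        push_neg at h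
        exact hxy (funext h)
      have hsub : Af x ∩ Af y ⊆ (fun j => Encodable.encode (pre x j)) '' (Set.Iic i₀) := by
        rintro z ⟨⟨j, rfl⟩, ⟨j', hj'⟩⟩
        have hpre : pre y j' = pre x j := Encodable.encode_injective hj'
        have hjj' : j' = j := by
          have := congrArg List.length hpre
          simpa using this
        subst hjj'
        refine ⟨j', ?_, rfl⟩
        by_contra hgt
        simp only [Set.mem_Iic, not_le] at hgt
        exact hi₀ (((pre_eq_pre.mp hpre) i₀ hgt).symm)
      exact Set.Finite.subset ((Set.finite_Iic i₀).image _) hsub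
    set Yf : (ℕ → Bool) → Set ℕ :=
      fun x => ⋃ j ∈ Af x, Set.Ico (N j) (N (j + 1)) with hYfdef
    have hYint : ∀ x, (interior (Yf x)).Nonempty := by
      intro x
      rw [Set.nonempty_iff_ne_empty]
      intro hempty
      have hdense : Dense (Yf x)ᶜ := by
        rw [denseE, compl_compl]
        exact hempty
      have hsubbad : Af x ⊆ {k | (Yf x)ᶜ ∩ Set.Ico (N k) (N (k + 1)) = ∅} := by
        intro j hj
        rw [Set.mem_setOf_eq, Set.eq_empty_iff_forall_notMem]
        rintro n ⟨hn1, hn2⟩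
        exact hn1 (Set.mem_biUnion hj hn2)
      exact (hAfinf x) (Set.Finite.subset (talagrand _ hdense) hsubbad)
    have hYfin : ∀ x y : ℕ → Bool, x ≠ y → (Yf x ∩ Yf y).Finite := by
      intro x y hxy
      have hsub : Yf x ∩ Yf y ⊆ ⋃ j ∈ (Af x ∩ Af y), Set.Ico (N j) (N (j + 1)) := by
        rintro n ⟨hnx, hny⟩
        obtain ⟨j, hjx, hnj⟩ := Set.mem_iUnion₂.mp hnx
        obtain ⟨j', hjy, hnj'⟩ := Set.mem_iUnion₂.mp hny
        have hjj : j = j' := by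
          by_contra hne
          rcases Nat.lt_or_ge j j' with hlt | hge
          · have : N (j + 1) ≤ N j' := hNmono.monotone hlt
            have h1 := hnj.2
            have h2 := hnj'.1
            omega
          · have hlt : j' < j := by omega
            have : N (j' + 1) ≤ N j := hNmono.monotone hlt
            have h1 := hnj'.2
            have h2 := hnj.1
            omega
        subst hjj
        exact Set.mem_iUnion₂.mpr ⟨j, ⟨hjx, hjy⟩, hnj⟩
      exact Set.Finite.subset
        (Set.Finite.biUnion (hAfad x y hxy) fun j _ => Set.finite_Ico _ _) hsub
    have hdisj : ∀ x y : ℕ → Bool, x ≠ y → interior (Yf x) ∩ interior (Yf y) = ∅ := by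
      intro x y hxy
      apply perfect_empty _ (isOpen_interior.inter isOpen_interior)
      exact Set.Finite.subset (hYfin x y hxy)
        (Set.inter_subset_inter interior_subset interior_subset)
    have hptinj : Function.Injective (fun A : Set ℕ => (hYint (chi A)).some) := by
      intro A B hAB
      by_contra hne
      have hchi : chi A ≠ chi B := fun h => hne (by rw [← pi_chi A, h, pi_chi])
      have h1 := (hYint (chi A)).some_mem
      have h2 := (hYint (chi B)).some_mem
      simp only at hAB
      rw [hAB] at h1
      have hmem : (hYint (chi B)).some ∈ interior (Yf (chi A)) ∩ interior (Yf (chi B)) :=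
        ⟨h1, h2⟩
      rw [hdisj _ _ hchi] at hmem
      exact hmem
    exact Function.cantor_injective _ hptinj
  · -- V nonempty : a flip argument
    obtain ⟨m, hm⟩ := cyl_subset_nhds (hVo.mem_nhds hv₀)
    set N2 : Set (ℕ → Bool) := M ∪ (flipAt m) ⁻¹' M with hN2
    have hN2m : IsMeagre N2 :=
      meagre_union hMm (hMm.preimage_of_isOpenMap (flipAt_cont m)
        (by rw [← flipHomeo_coe]; exact (flipHomeo m).isOpenMap))
    have hdense : Dense N2ᶜ := dense_of_mem_residual hN2m
    obtain ⟨v, hvN, hvc⟩ := hdense.exists_mem_open (isOpen_cylSet (m := m) v₀)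
      ⟨v₀, fun i _ => rfl⟩
    have hvV : v ∈ V := hm v hvc
    have hvM : v ∉ M := fun h => hvN (Or.inl h)
    have hvDb : v ∈ Db := (not_not.mp hvM).mpr hvV
    set fv : ℕ → Bool := flipAt m v with hfv
    have hfvc : ∀ i < m, fv i = v₀ i := by
      intro i hi
      rw [hfv]
      show (if i < m then v i else !(v i)) = v₀ i
      rw [if_pos hi]
      exact hvc i hi
    have hfvV : fv ∈ V := hm fv hfvc
    have hfvM : fv ∉ M := fun h => hvN (Or.inr h)
    have hfvDb : fv ∈ Db := (not_not.mp hfvM).mpr hfvV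
    have hXd : Dense (P v) := (memDb v).mp hvDb
    have hYd : Dense (P fv) := (memDb fv).mp hfvDb
    have hfin : (P v ∩ P fv) ⊆ Set.Iio m := by
      rintro n ⟨h1, h2⟩
      by_contra hge
      rw [Set.mem_Iio, not_lt] at hge
      have : fv n = !(v n) := by
        rw [hfv]
        show (if n < m then v n else !(v n)) = !(v n)
        rw [if_neg (not_lt.mpr hge)]
      have h1' : v n = true := h1
      have h2' : fv n = true := h2
      rw [this, h1'] at h2'
      simp at h2'
    have hinf := dense_inf _ (dense_inter _ _ hXd hYd)
    exact hinf (Set.Finite.subset (Set.finite_Iio m) hfin)
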